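/- Let ℓ be a prime, n ≥ 2, and a, b ∈ ℤ/ℓℤ, c ∈ ℤ/ℓⁿℤ. The number of pairs (α, β) ∈ (ℤ/ℓⁿℤ)² with αβ = c, α ≡ a (mod ℓ), β ≡ b (mod ℓ) equals: 0 if ab ≢ c (mod ℓ); ℓ^{n-1} if ab ≡ c (mod ℓ) and a or b is nonzero; (ℓ-1)(ord_ℓ(c) - 1)·ℓ^{n-1} if a ≡ b ≡ c ≡ 0 (mod ℓ) and c ≢ 0 (mod ℓⁿ); (nℓ - n - ℓ + 2)·ℓ^{n-1} if a ≡ b ≡ 0 (mod ℓ) and c ≡ 0 (mod ℓⁿ). -/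

import Mathlib

open Finset

section Aux

lemma natCast_eq_iff' (q : ℕ) [NeZero q] (m : ℕ) (c : ZMod q) :
    (m : ZMod q) = c ↔ m % q = c.val := by
  constructor
  · intro h; rw [← h, ZMod.val_natCast]
  · intro h
    have := congrArg (Nat.cast : ℕ → ZMod q) h
    rwa [ZMod.natCast_mod, ZMod.natCast_val, ZMod.cast_id] at this

lemma count_mod (q m r : ℕ) [NeZero q] (hm : m ∣ q) (hr : r < m) :
    (univ.filter fun x : ZMod q => x.val % m = r).card = q / m := by
  have hq : q ≠ 0 := NeZero.ne q
  have hm0 : m ≠ 0 := by rintro rfl; omega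
  have key : ∀ t, t < q / m → r + m * t < q := by
    intro t ht
    have h1 : m * (t + 1) ≤ m * (q / m) := Nat.mul_le_mul_left m ht
    have h2 : m * (q / m) = q := Nat.mul_div_cancel' hm
    rw [Nat.mul_succ] at h1
    omega
  rw [← Finset.card_range (q / m)]
  apply Finset.card_bij' (fun x _ => x.val / m)
      (fun t _ => ((r + m * t : ℕ) : ZMod q))
  · intro x hx
    simp only [mem_filter, mem_univ, true_and] at hx
    simp only [mem_range]
    have := ZMod.val_lt x
    exact Nat.div_lt_div_of_lt_of_dvd hm (by omega)
  · intro t ht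
    simp only [mem_range] at ht
    simp only [mem_filter, mem_univ, true_and]
    rw [ZMod.val_natCast_of_lt (key t ht), Nat.add_mul_mod_self_left, Nat.mod_eq_of_lt hr]
  · intro x hx
    simp only [mem_filter, mem_univ, true_and] at hx
    have : r + m * (x.val / m) = x.val := by
      have := Nat.mod_add_div x.val m
      omega
    rw [this, ZMod.natCast_val, ZMod.cast_id]
  · intro t ht
    simp only [mem_range] at ht
    rw [ZMod.val_natCast_of_lt (key t ht), Nat.add_mul_div_left _ _ (by omega),
      Nat.div_eq_of_lt hr]
    omega

lemma count_dvd (ℓ : ℕ) (hℓ : ℓ.Prime) (n k : ℕ) [NeZero (ℓ^n)] (hk : k ≤ n) :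
    (univ.filter fun x : ZMod (ℓ^n) => ℓ^k ∣ x.val).card = ℓ^(n-k) := by
  have h1 : (univ.filter fun x : ZMod (ℓ^n) => ℓ^k ∣ x.val)
      = univ.filter fun x : ZMod (ℓ^n) => x.val % ℓ^k = 0 := by
    ext x; simp [Nat.dvd_iff_mod_eq_zero]
  rw [h1, count_mod _ _ _ (pow_dvd_pow ℓ hk) (pow_pos hℓ.pos k),
    Nat.pow_div hk hℓ.pos]

lemma padic_bounds (ℓ : ℕ) (hℓ : ℓ.Prime) (n : ℕ) [NeZero (ℓ^n)] (α : ZMod (ℓ^n))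
    (h0 : α ≠ 0) (hπ : α.val % ℓ = 0) :
    1 ≤ padicValNat ℓ α.val ∧ padicValNat ℓ α.val ≤ n - 1 := by
  have hv : α.val ≠ 0 := fun h => h0 (by rwa [← ZMod.val_eq_zero])
  have hd : ℓ ∣ α.val := Nat.dvd_iff_mod_eq_zero.mpr hπ
  have h1 : 1 ≤ padicValNat ℓ α.val := by
    rw [← Nat.factorization_def _ hℓ]
    exact (hℓ.pow_dvd_iff_le_factorization hv).mp (by simpa using hd)
  have hdp : ℓ ^ padicValNat ℓ α.val ∣ α.val := by
    rw [← Nat.factorization_def _ hℓ]; exact Nat.ordProj_dvd _ _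
  have hle : ℓ ^ padicValNat ℓ α.val < ℓ ^ n :=
    lt_of_le_of_lt (Nat.le_of_dvd (by omega) hdp) (ZMod.val_lt α)
  have := (Nat.pow_lt_pow_iff_right hℓ.one_lt).mp hle
  omega

lemma count_vi (ℓ : ℕ) (hℓ : ℓ.Prime) (n i : ℕ) [NeZero (ℓ^n)]
    (h1 : 1 ≤ i) (h2 : i + 1 ≤ n) :
    (univ.filter fun α : ZMod (ℓ^n) =>
        α ≠ 0 ∧ α.val % ℓ = 0 ∧ padicValNat ℓ α.val = i).card
      = (ℓ - 1) * ℓ^(n-1-i) := by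
  have key : ∀ α : ZMod (ℓ^n),
      (α ≠ 0 ∧ α.val % ℓ = 0 ∧ padicValNat ℓ α.val = i)
        ↔ (ℓ^i ∣ α.val ∧ ¬ ℓ^(i+1) ∣ α.val) := by
    intro α
    constructor
    · rintro ⟨h0, hπ, hv⟩
      have hval : α.val ≠ 0 := fun h => h0 (by rwa [← ZMod.val_eq_zero])
      constructor
      · rw [← hv, ← Nat.factorization_def _ hℓ]; exact Nat.ordProj_dvd _ _
      · intro hdvd
        have := (hℓ.pow_dvd_iff_le_factorization hval).mp hdvd
        rw [Nat.factorization_def _ hℓ, hv] at this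
        omega
    · rintro ⟨hdvd, hndvd⟩
      have hval : α.val ≠ 0 := by rintro h; exact hndvd (h ▸ dvd_zero _)
      have h0 : α ≠ 0 := fun h => hval (by rw [h, ZMod.val_zero])
      have hπ : α.val % ℓ = 0 := by
        rw [← Nat.dvd_iff_mod_eq_zero]
        exact dvd_trans (dvd_pow_self ℓ (by omega)) hdvd
      refine ⟨h0, hπ, ?_⟩
      have hub := (hℓ.pow_dvd_iff_le_factorization hval).mp hdvd
      have hlb : ¬ (i + 1 ≤ α.val.factorization ℓ) := fun h =>
        hndvd ((hℓ.pow_dvd_iff_le_factorization hval).mpr h)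
      rw [Nat.factorization_def _ hℓ] at hub hlb
      omega
  have heq : (univ.filter fun α : ZMod (ℓ^n) =>
      α ≠ 0 ∧ α.val % ℓ = 0 ∧ padicValNat ℓ α.val = i)
      = univ.filter fun α : ZMod (ℓ^n) => ℓ^i ∣ α.val ∧ ¬ ℓ^(i+1) ∣ α.val := by
    ext α
    simp only [mem_filter, mem_univ, true_and]
    exact key α
  rw [heq]
  have hsd : (univ.filter fun α : ZMod (ℓ^n) => ℓ^i ∣ α.val ∧ ¬ ℓ^(i+1) ∣ α.val)
      = (univ.filter fun α : ZMod (ℓ^n) => ℓ^i ∣ α.val)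
        \ (univ.filter fun α : ZMod (ℓ^n) => ℓ^(i+1) ∣ α.val) := by
    ext α; simp only [mem_filter, mem_univ, true_and, mem_sdiff]
  rw [hsd, Finset.card_sdiff_of_subset (by
    intro α hα
    simp only [mem_filter, mem_univ, true_and] at hα ⊢
    exact dvd_trans (pow_dvd_pow ℓ (by omega)) hα)]
  rw [count_dvd ℓ hℓ n i (by omega), count_dvd ℓ hℓ n (i+1) h2]
  have e1 : n - i = (n - 1 - i) + 1 := by omega
  have e2 : n - (i+1) = n - 1 - i := by omega
  rw [e1, e2, pow_succ, Nat.sub_one_mul, Nat.mul_comm]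

lemma exists_unit_fact (ℓ : ℕ) (hℓ : ℓ.Prime) (n : ℕ) [NeZero (ℓ^n)]
    (α : ZMod (ℓ^n)) (hα : α ≠ 0) :
    ∃ u : (ZMod (ℓ^n))ˣ, α = (ℓ:ZMod (ℓ^n))^(padicValNat ℓ α.val) * u := by
  have hv : α.val ≠ 0 := fun h => hα (by rwa [← ZMod.val_eq_zero])
  have hfac : ℓ ^ (padicValNat ℓ α.val) * (α.val / ℓ ^ (padicValNat ℓ α.val)) = α.val := by
    rw [← Nat.factorization_def _ hℓ]
    exact Nat.ordProj_mul_ordCompl_eq_self α.val ℓ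
  have hcop : Nat.Coprime (α.val / ℓ ^ (padicValNat ℓ α.val)) (ℓ^n) := by
    apply Nat.Coprime.pow_right
    have := Nat.coprime_ordCompl hℓ hv
    rw [Nat.factorization_def _ hℓ] at this
    exact this.symm
  refine ⟨ZMod.unitOfCoprime _ hcop, ?_⟩
  have h2 : ((α.val : ℕ) : ZMod (ℓ^n)) = α := by simp [ZMod.natCast_val, ZMod.cast_id]
  rw [ZMod.coe_unitOfCoprime]
  conv_lhs => rw [← h2, ← hfac]
  push_cast; ring

lemma count_solve (ℓ : ℕ) (hℓ : ℓ.Prime) (n i : ℕ) [NeZero (ℓ^n)]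
    (h1 : 1 ≤ i) (h2 : i + 1 ≤ n) (c : ZMod (ℓ^n)) :
    (univ.filter fun γ : ZMod (ℓ^n) => (ℓ:ZMod (ℓ^n))^i * γ = c ∧ γ.val % ℓ = 0).card
      = if ℓ^(i+1) ∣ c.val then ℓ^i else 0 := by
  have hℓ1 : 1 < ℓ := hℓ.one_lt
  have hsplit : ℓ^n = ℓ^i * ℓ^(n-i) := by rw [← pow_add]; congr 1; omega
  have hdvd : ℓ ∣ ℓ ^ (n-i) := dvd_pow_self ℓ (by omega)
  have hcond : ∀ γ : ZMod (ℓ^n), ((ℓ:ZMod (ℓ^n))^i * γ = c) ↔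
      ℓ^i * (γ.val % ℓ^(n-i)) = c.val := by
    intro γ
    have h0 : (ℓ:ZMod (ℓ^n))^i * γ = ((ℓ^i * γ.val : ℕ) : ZMod (ℓ^n)) := by
      push_cast [ZMod.natCast_val, ZMod.cast_id]; ring
    have hmm : ∀ w : ℕ, (ℓ^i * w) % (ℓ^n) = ℓ^i * (w % ℓ^(n-i)) := fun w => by
      rw [hsplit, Nat.mul_mod_mul_left]
    rw [h0, natCast_eq_iff', hmm γ.val]
  by_cases hd : ℓ^(i+1) ∣ c.val
  · rw [if_pos hd]
    set d := c.val / ℓ^i with hd_def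
    have hdvd_i : ℓ^i ∣ c.val := dvd_trans (pow_dvd_pow ℓ (by omega)) hd
    have hc : c.val = ℓ^i * d := (Nat.mul_div_cancel' hdvd_i).symm
    have hdℓ : ℓ ∣ d := by
      rcases hd with ⟨e, he⟩
      refine ⟨e, ?_⟩
      have : ℓ^i * d = ℓ^i * (ℓ * e) := by rw [← hc, he]; ring
      exact Nat.eq_of_mul_eq_mul_left (by positivity) this
    have hdlt : d < ℓ^(n-i) := by
      have h' : ℓ^i * d < ℓ^i * ℓ^(n-i) := by
        rw [← hsplit, ← hc]; exact ZMod.val_lt c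
      exact lt_of_mul_lt_mul_left h' (Nat.zero_le _)
    have heq : (univ.filter fun γ : ZMod (ℓ^n) => (ℓ:ZMod (ℓ^n))^i * γ = c ∧ γ.val % ℓ = 0)
        = univ.filter fun γ : ZMod (ℓ^n) => γ.val % ℓ^(n-i) = d := by
      ext γ
      simp only [mem_filter, mem_univ, true_and, hcond]
      constructor
      · rintro ⟨h, -⟩
        rw [hc] at h
        exact Nat.eq_of_mul_eq_mul_left (by positivity) h
      · intro h
        refine ⟨by rw [h, hc], ?_⟩
        rw [← Nat.mod_mod_of_dvd _ hdvd, h]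
        exact Nat.dvd_iff_mod_eq_zero.mp hdℓ
    rw [heq, count_mod _ _ _ ⟨ℓ^i, by rw [hsplit]; ring⟩ hdlt,
      Nat.pow_div (by omega) (by omega)]
    congr 1; omega
  · rw [if_neg hd]
    rw [Finset.card_eq_zero, Finset.filter_eq_empty_iff]
    rintro γ -
    rintro ⟨h, hπ⟩
    rw [hcond] at h
    apply hd
    have hh : ℓ ∣ γ.val % ℓ^(n-i) := by
      rw [Nat.dvd_iff_mod_eq_zero, Nat.mod_mod_of_dvd _ hdvd, hπ]
    rcases hh with ⟨e, he⟩
    exact ⟨e, by rw [← h, he, pow_succ]; ring⟩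

lemma pair_card {M : Type*} [Fintype M] [DecidableEq M] (P : M → Prop) (Q : M → M → Prop)
    [DecidablePred P] [∀ x, DecidablePred (Q x)] :
    (univ.filter fun p : M × M => P p.1 ∧ Q p.1 p.2).card
      = ∑ α ∈ univ.filter P, (univ.filter (Q α)).card := by
  rw [Finset.card_eq_sum_card_fiberwise
    (f := Prod.fst) (t := univ.filter P) (fun p hp => by
      simp only [coe_filter, mem_filter, mem_univ, true_and, Set.mem_setOf_eq] at hp ⊢; exact hp.1)]
  refine Finset.sum_congr rfl fun α hα => ?_
  simp only [mem_filter, mem_univ, true_and] at hα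
  apply Finset.card_bij' (fun p _ => p.2) (fun β _ => (α, β))
  case hi =>
    intro p hp
    simp only [mem_filter, mem_univ, true_and] at hp ⊢
    obtain ⟨⟨_, h2⟩, h3⟩ := hp
    rwa [← h3]
  case hj =>
    intro β hβ
    simp only [mem_filter, mem_univ, true_and] at hβ ⊢
    exact ⟨⟨hα, hβ⟩, trivial⟩
  case left_inv =>
    intro p hp
    simp only [mem_filter, mem_univ, true_and] at hp
    rw [Prod.ext_iff]
    exact ⟨hp.2.symm, rfl⟩
  case right_inv => intro β hβ; rfl

lemma swap_card {M : Type*} [Fintype M] [DecidableEq M] (R : M × M → Prop) [DecidablePred R] :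
    (univ.filter R).card = (univ.filter fun p : M × M => R p.swap).card := by
  apply Finset.card_bij' (fun p _ => p.swap) (fun p _ => p.swap) <;> simp

end Aux

lemma count2 (ℓ : ℕ) (hℓ : ℓ.Prime) (n : ℕ) (hn : 1 ≤ n) [NeZero (ℓ^n)]
    (a b : ZMod ℓ) (c : ZMod (ℓ^n))
    (hc : ZMod.castHom (dvd_pow_self ℓ (by omega : n ≠ 0)) (ZMod ℓ) c = a * b)
    (ha : a ≠ 0) :
    (univ.filter fun p : ZMod (ℓ^n) × ZMod (ℓ^n) =>
        p.1 * p.2 = c ∧ ZMod.castHom (dvd_pow_self ℓ (by omega : n ≠ 0)) (ZMod ℓ) p.1 = a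
          ∧ ZMod.castHom (dvd_pow_self ℓ (by omega : n ≠ 0)) (ZMod ℓ) p.2 = b).card
      = ℓ^(n-1) := by
  haveI : NeZero ℓ := ⟨hℓ.ne_zero⟩
  set π := ZMod.castHom (dvd_pow_self ℓ (by omega : n ≠ 0)) (ZMod ℓ) with hπ
  have hπval : ∀ x : ZMod (ℓ^n), π x = ((x.val : ℕ) : ZMod ℓ) := fun x => by
    rw [hπ, ZMod.castHom_apply, ← ZMod.natCast_val]
  have hunit : ∀ α : ZMod (ℓ^n), π α ≠ 0 → IsUnit α := by
    intro α h
    rw [hπval] at h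
    have hnd : ¬ ℓ ∣ α.val := fun hd => h ((ZMod.natCast_eq_zero_iff _ _).mpr hd)
    have hcop : Nat.Coprime (α.val) (ℓ^n) :=
      Nat.Coprime.pow_right _ (Nat.coprime_comm.mp (hℓ.coprime_iff_not_dvd.mpr hnd))
    have := (ZMod.isUnit_iff_coprime α.val (ℓ^n)).mpr hcop
    simpa [ZMod.natCast_val, ZMod.cast_id] using this
  have hre : (univ.filter fun p : ZMod (ℓ^n) × ZMod (ℓ^n) =>
        p.1 * p.2 = c ∧ π p.1 = a ∧ π p.2 = b)
      = univ.filter fun p : ZMod (ℓ^n) × ZMod (ℓ^n) =>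
        π p.1 = a ∧ (p.1 * p.2 = c ∧ π p.2 = b) := by
    ext p; simp only [mem_filter, mem_univ, true_and]; tauto
  rw [hre, pair_card (fun α : ZMod (ℓ^n) => π α = a) (fun α β : ZMod (ℓ^n) => α * β = c ∧ π β = b)]
  have hone : ∀ α ∈ univ.filter (fun α : ZMod (ℓ^n) => π α = a),
      (univ.filter fun β : ZMod (ℓ^n) => α * β = c ∧ π β = b).card = 1 := by
    intro α hα
    simp only [mem_filter, mem_univ, true_and] at hα
    obtain ⟨u, hu⟩ := hunit α (by rw [hα]; exact ha)
    rw [Finset.card_eq_one]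
    refine ⟨↑u⁻¹ * c, ?_⟩
    ext β
    simp only [mem_filter, mem_univ, true_and, mem_singleton]
    constructor
    · rintro ⟨h1, -⟩
      rw [← h1, ← hu, Units.inv_mul_cancel_left]
    · rintro rfl
      have hiu : π ↑u⁻¹ * a = 1 := by
        rw [← hα, ← hu, ← map_mul, Units.inv_mul, map_one]
      refine ⟨by rw [← hu, Units.mul_inv_cancel_left], ?_⟩
      rw [map_mul, hc, ← mul_assoc, hiu, one_mul]
  rw [Finset.sum_congr rfl hone, Finset.sum_const, smul_eq_mul, mul_one]
  have hA : (univ.filter fun α : ZMod (ℓ^n) => π α = a)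
      = univ.filter fun α : ZMod (ℓ^n) => α.val % ℓ = a.val := by
    ext α
    simp only [mem_filter, mem_univ, true_and]
    rw [hπval, natCast_eq_iff']
  have hdiv : ℓ^n / ℓ = ℓ^(n-1) := by
    have h : ℓ^n / ℓ^1 = ℓ^(n-1) := Nat.pow_div (by omega : 1 ≤ n) hℓ.pos
    rwa [pow_one] at h
  rw [hA, count_mod _ _ _ (dvd_pow_self ℓ (by omega : n ≠ 0)) (ZMod.val_lt a), hdiv]

lemma count0 (ℓ : ℕ) (hℓ : ℓ.Prime) (n : ℕ) (hn : 2 ≤ n) [NeZero (ℓ^n)]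
    (c : ZMod (ℓ^n)) :
    (univ.filter fun p : ZMod (ℓ^n) × ZMod (ℓ^n) =>
        p.1 * p.2 = c ∧ ZMod.castHom (dvd_pow_self ℓ (Nat.pos_iff_ne_zero.mp (by omega) : n ≠ 0)) (ZMod ℓ) p.1 = 0
          ∧ ZMod.castHom (dvd_pow_self ℓ (Nat.pos_iff_ne_zero.mp (by omega) : n ≠ 0)) (ZMod ℓ) p.2 = 0).card
      = (if c = 0 then ℓ^(n-1) else 0)
        + ∑ i ∈ Icc 1 (n-1), (ℓ-1) * ℓ^(n-1-i) * (if ℓ^(i+1) ∣ c.val then ℓ^i else 0) := by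
  haveI : NeZero ℓ := ⟨hℓ.ne_zero⟩
  set π := ZMod.castHom (dvd_pow_self ℓ (Nat.pos_iff_ne_zero.mp (by omega) : n ≠ 0)) (ZMod ℓ) with hπ
  have hπval : ∀ x : ZMod (ℓ^n), π x = ((x.val : ℕ) : ZMod ℓ) := fun x => by
    rw [hπ, ZMod.castHom_apply, ← ZMod.natCast_val]
  have hzero : ∀ x : ZMod (ℓ^n), π x = 0 ↔ x.val % ℓ = 0 := fun x => by
    rw [hπval, natCast_eq_iff', ZMod.val_zero]
  have hdiv : ℓ^n / ℓ = ℓ^(n-1) := by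
    have h : ℓ^n / ℓ^1 = ℓ^(n-1) := Nat.pow_div (by omega : 1 ≤ n) hℓ.pos
    rwa [pow_one] at h
  -- reorder and split off α
  have hre : (univ.filter fun p : ZMod (ℓ^n) × ZMod (ℓ^n) =>
        p.1 * p.2 = c ∧ π p.1 = 0 ∧ π p.2 = 0)
      = univ.filter fun p : ZMod (ℓ^n) × ZMod (ℓ^n) =>
        π p.1 = 0 ∧ (p.1 * p.2 = c ∧ π p.2 = 0) := by
    ext p; simp only [mem_filter, mem_univ, true_and]; tauto
  rw [hre, pair_card (fun α : ZMod (ℓ^n) => π α = 0)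
    (fun α β : ZMod (ℓ^n) => α * β = c ∧ π β = 0)]
  have h0mem : (0 : ZMod (ℓ^n)) ∈ univ.filter (fun α : ZMod (ℓ^n) => π α = 0) := by
    simp only [mem_filter, mem_univ, true_and, map_zero]
  rw [← Finset.add_sum_erase _ _ h0mem]
  congr 1
  -- the α = 0 term
  · by_cases hc : c = 0
    · rw [if_pos hc]
      have : (univ.filter fun β : ZMod (ℓ^n) => (0:ZMod (ℓ^n)) * β = c ∧ π β = 0)
          = univ.filter fun β : ZMod (ℓ^n) => β.val % ℓ = 0 := by
        ext β
        simp only [mem_filter, mem_univ, true_and, zero_mul, hc, true_and, hzero,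
          eq_self_iff_true]
      rw [this, count_mod _ _ _ (dvd_pow_self ℓ (Nat.pos_iff_ne_zero.mp (by omega) : n ≠ 0)) hℓ.pos, hdiv]
    · rw [if_neg hc]
      rw [Finset.card_eq_zero, Finset.filter_eq_empty_iff]
      rintro β - ⟨h1, -⟩
      exact hc (by rw [← h1, zero_mul])
  -- the sum over α ≠ 0
  · have hterm : ∀ α ∈ (univ.filter (fun α : ZMod (ℓ^n) => π α = 0)).erase 0,
        (univ.filter fun β : ZMod (ℓ^n) => α * β = c ∧ π β = 0).card
          = (if ℓ^(padicValNat ℓ α.val + 1) ∣ c.val then ℓ^(padicValNat ℓ α.val) else 0) := by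
      intro α hα
      rw [Finset.mem_erase, mem_filter] at hα
      obtain ⟨hα0, -, hαπ⟩ := hα
      have hαmod : α.val % ℓ = 0 := (hzero α).mp hαπ
      obtain ⟨hv1, hv2⟩ := padic_bounds ℓ hℓ n α hα0 hαmod
      set i := padicValNat ℓ α.val with hi
      obtain ⟨u, hu⟩ := exists_unit_fact ℓ hℓ n α hα0
      have hbij : (univ.filter fun β : ZMod (ℓ^n) => α * β = c ∧ π β = 0).card
          = (univ.filter fun γ : ZMod (ℓ^n) =>
              (ℓ:ZMod (ℓ^n))^i * γ = c ∧ γ.val % ℓ = 0).card := by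
        apply Finset.card_bij' (fun β _ => (u : ZMod (ℓ^n)) * β)
            (fun γ _ => ((u⁻¹ : (ZMod (ℓ^n))ˣ) : ZMod (ℓ^n)) * γ)
        case hi =>
          intro β hβ
          simp only [mem_filter, mem_univ, true_and] at hβ ⊢
          obtain ⟨h1, h2⟩ := hβ
          constructor
          · rw [← h1, hu]; ring
          · rw [← hzero, map_mul, (hzero β).mpr ((hzero β).mp h2), mul_zero]
        case hj =>
          intro γ hγ
          simp only [mem_filter, mem_univ, true_and] at hγ ⊢
          obtain ⟨h1, h2⟩ := hγ
          constructor
          · rw [hu, ← h1]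
            have : (ℓ:ZMod (ℓ^n))^i * ↑u * (↑u⁻¹ * γ)
                = (ℓ:ZMod (ℓ^n))^i * (↑u * (↑u⁻¹ * γ)) := by ring
            rw [this, Units.mul_inv_cancel_left]
          · rw [map_mul, (hzero γ).mpr h2, mul_zero]
        case left_inv =>
          intro β hβ; exact Units.inv_mul_cancel_left u β
        case right_inv =>
          intro γ hγ; exact Units.mul_inv_cancel_left u γ
      rw [hbij, count_solve ℓ hℓ n i hv1 (by omega) c]
    rw [Finset.sum_congr rfl hterm]
    rw [← Finset.sum_fiberwise_of_maps_to (g := fun α : ZMod (ℓ^n) => padicValNat ℓ α.val)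
      (t := Icc 1 (n-1)) (fun α hα => by
        rw [Finset.mem_erase, mem_filter] at hα
        obtain ⟨hα0, -, hαπ⟩ := hα
        obtain ⟨hv1, hv2⟩ := padic_bounds ℓ hℓ n α hα0 ((hzero α).mp hαπ)
        rw [mem_Icc]; exact ⟨hv1, hv2⟩)]
    refine Finset.sum_congr rfl fun i hi => ?_
    rw [mem_Icc] at hi
    have hset : (((univ.filter (fun α : ZMod (ℓ^n) => π α = 0)).erase 0).filter
          (fun α => padicValNat ℓ α.val = i))
        = univ.filter fun α : ZMod (ℓ^n) =>
            α ≠ 0 ∧ α.val % ℓ = 0 ∧ padicValNat ℓ α.val = i := by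
      ext α
      simp only [mem_filter, Finset.mem_erase, mem_univ, true_and, hzero]
      tauto
    have hconst : ∀ α ∈ (((univ.filter (fun α : ZMod (ℓ^n) => π α = 0)).erase 0).filter
          (fun α => padicValNat ℓ α.val = i)),
        (if ℓ^(padicValNat ℓ α.val + 1) ∣ c.val then ℓ^(padicValNat ℓ α.val) else 0)
          = (if ℓ^(i+1) ∣ c.val then ℓ^i else 0) := by
      intro α hα
      rw [mem_filter] at hα
      rw [hα.2]
    rw [Finset.sum_congr rfl hconst, Finset.sum_const, hset,
      count_vi ℓ hℓ n i hi.1 (by omega), smul_eq_mul]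

theorem count_product_pairs_zmod (ℓ : ℕ) (hℓ : ℓ.Prime) (n : ℕ) (hn : 2 ≤ n)
    (a b : ZMod ℓ) (c : ZMod (ℓ ^ n)) :
    letI π : ZMod (ℓ ^ n) →+* ZMod ℓ :=
      ZMod.castHom (dvd_pow_self ℓ (by omega : n ≠ 0)) (ZMod ℓ)
    letI N : ℕ := Nat.card {p : ZMod (ℓ ^ n) × ZMod (ℓ ^ n) //
      p.1 * p.2 = c ∧ π p.1 = a ∧ π p.2 = b}
    (π c ≠ a * b → N = 0) ∧
    (π c = a * b → (a ≠ 0 ∨ b ≠ 0) → N = ℓ ^ (n - 1)) ∧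
    (a = 0 → b = 0 → π c = 0 → c ≠ 0 →
      N = (ℓ - 1) * (padicValNat ℓ c.val - 1) * ℓ ^ (n - 1)) ∧
    (a = 0 → b = 0 → c = 0 → N = (n * ℓ - n - ℓ + 2) * ℓ ^ (n - 1)) := by
  haveI : NeZero (ℓ^n) := ⟨pow_ne_zero n hℓ.ne_zero⟩
  haveI : NeZero ℓ := ⟨hℓ.ne_zero⟩
  set π := ZMod.castHom (dvd_pow_self ℓ (by omega : n ≠ 0)) (ZMod ℓ) with hπ
  have hNcard : Nat.card {p : ZMod (ℓ ^ n) × ZMod (ℓ ^ n) //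
        p.1 * p.2 = c ∧ π p.1 = a ∧ π p.2 = b}
      = (univ.filter fun p : ZMod (ℓ ^ n) × ZMod (ℓ ^ n) =>
        p.1 * p.2 = c ∧ π p.1 = a ∧ π p.2 = b).card := by
    rw [Nat.card_eq_fintype_card, Fintype.card_subtype]
  refine ⟨?_, ?_, ?_, ?_⟩
  · -- π c ≠ a * b
    intro hne
    rw [hNcard, Finset.card_eq_zero, Finset.filter_eq_empty_iff]
    rintro p - ⟨h1, h2, h3⟩
    exact hne (by rw [← h1, map_mul, h2, h3])
  · -- a or b nonzero
    intro hc hab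
    rcases hab with ha | hb
    · rw [hNcard]
      exact count2 ℓ hℓ n (by omega) a b c hc ha
    · rw [hNcard, swap_card]
      have hre : (univ.filter fun p : ZMod (ℓ^n) × ZMod (ℓ^n) =>
            p.swap.1 * p.swap.2 = c ∧ π p.swap.1 = a ∧ π p.swap.2 = b)
          = univ.filter fun p : ZMod (ℓ^n) × ZMod (ℓ^n) =>
            p.1 * p.2 = c ∧ π p.1 = b ∧ π p.2 = a := by
        ext p
        simp only [mem_filter, mem_univ, true_and, Prod.fst_swap, Prod.snd_swap]
        rw [mul_comm]
        tauto
      rw [hre]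
      exact count2 ℓ hℓ n (by omega) b a c (by rw [hc, mul_comm]) hb
  · -- a = b = 0, c ≠ 0
    rintro rfl rfl hc hc0
    rw [hNcard, count0 ℓ hℓ n hn c, if_neg hc0, zero_add]
    have hcval : c.val ≠ 0 := fun h => hc0 (by rwa [← ZMod.val_eq_zero])
    have hcmod : c.val % ℓ = 0 := by
      have := hc
      rw [hπ, ZMod.castHom_apply, ← ZMod.natCast_val, natCast_eq_iff', ZMod.val_zero] at this
      exact this
    obtain ⟨hv1, hv2⟩ := padic_bounds ℓ hℓ n c hc0 hcmod
    set v := padicValNat ℓ c.val with hv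
    have hdvd_iff : ∀ i : ℕ, (ℓ^(i+1) ∣ c.val) ↔ i + 1 ≤ v := fun i => by
      rw [hℓ.pow_dvd_iff_le_factorization hcval, Nat.factorization_def _ hℓ]
    have hstep : ∀ i ∈ Icc 1 (n-1),
        (ℓ-1) * ℓ^(n-1-i) * (if ℓ^(i+1) ∣ c.val then ℓ^i else 0)
          = (if i + 1 ≤ v then (ℓ-1) * ℓ^(n-1) else 0) := by
      intro i hi
      rw [mem_Icc] at hi
      have hpw : (ℓ-1) * ℓ^(n-1-i) * ℓ^i = (ℓ-1) * ℓ^(n-1) := by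
        rw [mul_assoc, ← pow_add]
        congr 2
        omega
      simp only [hdvd_iff i, mul_ite, mul_zero, hpw]
    rw [Finset.sum_congr rfl hstep, ← Finset.sum_filter]
    have hfil : (Icc 1 (n-1)).filter (fun i => i + 1 ≤ v) = Icc 1 (v-1) := by
      ext j
      simp only [mem_filter, mem_Icc]
      omega
    rw [hfil, Finset.sum_const, Nat.card_Icc, smul_eq_mul]
    have : v - 1 + 1 - 1 = v - 1 := by omega
    rw [this]
    ring
  · -- a = b = 0, c = 0
    rintro rfl rfl rfl
    rw [hNcard, count0 ℓ hℓ n hn 0, if_pos rfl]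
    have hval0 : (0 : ZMod (ℓ^n)).val = 0 := ZMod.val_zero
    have hstep : ∀ i ∈ Icc 1 (n-1),
        (ℓ-1) * ℓ^(n-1-i) * (if ℓ^(i+1) ∣ (0 : ZMod (ℓ^n)).val then ℓ^i else 0)
          = (ℓ-1) * ℓ^(n-1) := by
      intro i hi
      rw [mem_Icc] at hi
      rw [if_pos (by rw [hval0]; exact dvd_zero _), mul_assoc, ← pow_add]
      congr 2
      omega
    rw [Finset.sum_congr rfl hstep, Finset.sum_const, Nat.card_Icc, smul_eq_mul]
    have he : n - 1 + 1 - 1 = n - 1 := by omega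
    rw [he]
    -- arithmetic: ℓ^(n-1) + (n-1)*((ℓ-1)*ℓ^(n-1)) = (n*ℓ - n - ℓ + 2) * ℓ^(n-1)
    have hℓ2 : 2 ≤ ℓ := hℓ.two_le
    have h1 : n * (ℓ-1) = n*ℓ - n := by
      rw [Nat.mul_sub, Nat.mul_one]
    have h2 : (n-1) * (ℓ-1) = n * (ℓ-1) - (ℓ-1) := by
      rw [Nat.sub_one_mul]
    have h3 : 2 * (ℓ-1) ≤ n * (ℓ-1) := Nat.mul_le_mul_right _ hn
    have K : 1 + (n-1)*(ℓ-1) = n*ℓ - n - ℓ + 2 := by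
      rw [h2, h1]
      rw [h1] at h3
      generalize hM : n*ℓ - n = M at h3 ⊢
      omega
    rw [← K, add_mul, one_mul, mul_assoc]
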